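/- Let K be a field of characteristic 0 and let P ∈ K[X₁,…,Xₙ]ⁿ be a polynomial map each of whose components has total degree at most 2. Then P is injective if and only if det J_P(X) ≠ 0 for every X ∈ Kⁿ. -/

import Mathlib

open MvPolynomial Finsupp


/-- Peel off one unit from a nonzero `ℕ`-valued finsupp. -/
lemma peel {σ : Type*} (d : σ →₀ ℕ) (hd : d ≠ 0) :
    ∃ (i : σ) (d' : σ →₀ ℕ), d = Finsupp.single i 1 + d' ∧
      (d'.sum fun _ e => e) + 1 = d.sum fun _ e => e := by
  obtain ⟨i, hi⟩ := Finsupp.support_nonempty_iff.2 hd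
  have hi1 : 1 ≤ d i := Nat.one_le_iff_ne_zero.2 (Finsupp.mem_support_iff.1 hi)
  refine ⟨i, d - Finsupp.single i 1, ?_, ?_⟩
  · ext a
    by_cases h : a = i
    · subst h; simp [Nat.add_sub_cancel' hi1]
    · simp [Finsupp.single_eq_of_ne' (Ne.symm h)]
  · have hdd : d = Finsupp.single i 1 + (d - Finsupp.single i 1) := by
      ext a
      by_cases h : a = i
      · subst h; simp [Nat.add_sub_cancel' hi1]
      · simp [Finsupp.single_eq_of_ne' (Ne.symm h)]
    conv_rhs => rw [hdd]
    rw [Finsupp.sum_add_index' (fun _ => rfl) (fun _ _ _ => rfl),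
      Finsupp.sum_single_index rfl]
    omega

lemma classify {σ : Type*} (d : σ →₀ ℕ) (hd : (d.sum fun _ e => e) ≤ 2) :
    d = 0 ∨ (∃ i, d = Finsupp.single i 1) ∨
      ∃ i j, d = Finsupp.single i 1 + Finsupp.single j 1 := by
  by_cases h0 : d = 0
  · exact Or.inl h0
  obtain ⟨i, d₁, h₁, hs₁⟩ := peel d h0
  by_cases h01 : d₁ = 0
  · exact Or.inr (Or.inl ⟨i, by simp [h₁, h01]⟩)
  obtain ⟨j, d₂, h₂, hs₂⟩ := peel d₁ h01
  have hz : (d₂.sum fun _ e => e) = 0 := by omega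
  have : d₂ = 0 := by
    ext a
    by_cases ha : a ∈ d₂.support
    · have := Finset.sum_eq_zero_iff.1 hz a ha
      simpa using this
    · simpa using Finsupp.notMem_support_iff.1 ha
  exact Or.inr (Or.inr ⟨i, j, by simp [h₁, h₂, this]⟩)


section
variable {n : ℕ} {K : Type*} [Field K] [CharZero K]

lemma key_mono (x h : Fin n → K) (d : Fin n →₀ ℕ) (c : K)
    (hd : d = 0 ∨ (∃ i, d = Finsupp.single i 1) ∨
      ∃ i j, d = Finsupp.single i 1 + Finsupp.single j 1) :
    eval (fun i => x i + h i) (monomial d c) - eval x (monomial d c)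
      = ∑ k, eval (fun i => x i + h i / 2) (pderiv k (monomial d c)) * h k := by
  have h2 : (2 : K) ≠ 0 := two_ne_zero
  rcases hd with rfl | ⟨i, rfl⟩ | ⟨i, j, rfl⟩
  · simp [monomial_zero']
  · have hm : (monomial (Finsupp.single i 1)) c = C c * X i := by
      simp [monomial_eq, Finsupp.prod_single_index]
    rw [hm]
    simp only [map_mul, eval_C, eval_X, Derivation.leibniz, pderiv_C, pderiv_X,
      smul_eq_mul, map_add, zero_mul, mul_zero, zero_add, add_zero, map_smul]
    simp [Pi.single_apply, mul_ite, ite_mul, Finset.sum_ite_eq, Finset.sum_ite_eq']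
    ring
  · have hm : (monomial (Finsupp.single i 1 + Finsupp.single j 1)) c
        = C c * (X i * X j) := by
      rw [show c = c * 1 by ring, ← monomial_mul]
      simp [monomial_eq, Finsupp.prod_single_index, mul_assoc]
    rw [hm]
    simp only [map_mul, eval_C, eval_X, Derivation.leibniz, pderiv_C, pderiv_X,
      smul_eq_mul, map_add, zero_mul, mul_zero, zero_add, add_zero, map_smul]
    simp only [Pi.single_apply, mul_ite, ite_mul, mul_one, one_mul, zero_mul, mul_zero,
      add_mul, mul_add, Finset.sum_add_distrib]
    simp [Finset.sum_ite_eq, Finset.sum_ite_eq']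
    field_simp
    ring

lemma key (p : MvPolynomial (Fin n) K) (hp : p.totalDegree ≤ 2) (x h : Fin n → K) :
    eval (fun i => x i + h i) p - eval x p
      = ∑ k, eval (fun i => x i + h i / 2) (pderiv k p) * h k := by
  have hmono : ∀ d ∈ p.support,
      eval (fun i => x i + h i) (monomial d (coeff d p)) - eval x (monomial d (coeff d p))
        = ∑ k, eval (fun i => x i + h i / 2) (pderiv k (monomial d (coeff d p))) * h k := by
    intro d hdsup
    exact key_mono x h d _ (classify d ((le_totalDegree hdsup).trans hp))
  calc eval (fun i => x i + h i) p - eval x p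
      = ∑ d ∈ p.support, (eval (fun i => x i + h i) (monomial d (coeff d p))
          - eval x (monomial d (coeff d p))) := by
        rw [Finset.sum_sub_distrib, ← map_sum, ← map_sum, ← as_sum]
    _ = ∑ d ∈ p.support, ∑ k, eval (fun i => x i + h i / 2)
          (pderiv k (monomial d (coeff d p))) * h k := Finset.sum_congr rfl hmono
    _ = ∑ k, eval (fun i => x i + h i / 2) (pderiv k p) * h k := by
        rw [Finset.sum_comm]
        refine Finset.sum_congr rfl fun k _ => ?_
        rw [← Finset.sum_mul, ← map_sum, ← map_sum, ← as_sum]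
end

/-- A polynomial map `P` over a field `K` of characteristic `0` whose components have total
degree at most `2` is injective iff its Jacobian determinant is nonzero at every point. -/
theorem quadratic_map_injective_iff_jacobian_ne_zero (n : ℕ) (K : Type*) [Field K] [CharZero K]
    (P : Fin n → MvPolynomial (Fin n) K)
    (hdeg : ∀ i, (P i).totalDegree ≤ 2) :
    Function.Injective (fun x : Fin n → K => fun i => MvPolynomial.eval x (P i)) ↔
      ∀ X : Fin n → K,
        (Matrix.of fun j k => MvPolynomial.eval X (MvPolynomial.pderiv k (P j))).det ≠ 0 := by
  constructor
  · intro hinj X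
    by_contra hdet
    obtain ⟨v, hv, hMv⟩ := Matrix.exists_mulVec_eq_zero_iff.2 hdet
    set a : Fin n → K := fun i => X i - v i / 2 with ha
    have hmid : (fun i => a i + v i / 2) = X := by funext i; simp [ha]
    have heq : (fun i => MvPolynomial.eval (fun i' => a i' + v i') (P i))
        = fun i => MvPolynomial.eval a (P i) := by
      funext j
      have hk := key (P j) (hdeg j) a v
      rw [hmid] at hk
      have hz : ∑ k, MvPolynomial.eval X (MvPolynomial.pderiv k (P j)) * v k = 0 := by
        have := congrFun hMv j
        simpa [Matrix.mulVec, dotProduct] using this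
      rw [hz] at hk
      exact sub_eq_zero.mp hk
    have h0 := hinj (a₁ := fun i' => a i' + v i') (a₂ := a) heq
    apply hv
    funext i
    have := congrFun h0 i
    simpa using this
  · intro hdet a b hab
    set v : Fin n → K := fun i => b i - a i with hv
    set m : Fin n → K := fun i => a i + v i / 2 with hm
    have hk : ∀ j, ∑ k, MvPolynomial.eval m (MvPolynomial.pderiv k (P j)) * v k = 0 := by
      intro j
      have hk := key (P j) (hdeg j) a v
      have hb : (fun i => a i + v i) = b := by funext i; simp [hv]
      rw [hb] at hk
      have hba : MvPolynomial.eval b (P j) = MvPolynomial.eval a (P j) :=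
        (congrFun hab j).symm
      rw [← hk, hba, sub_self]
    have hMv : Matrix.mulVec (Matrix.of fun j k =>
        MvPolynomial.eval m (MvPolynomial.pderiv k (P j))) v = 0 := by
      funext j
      simpa [Matrix.mulVec, dotProduct] using hk j
    by_contra hne
    have hvne : v ≠ 0 := by
      intro h0
      apply hne
      funext i
      have := congrFun h0 i
      simp [hv] at this
      exact (sub_eq_zero.mp this).symm
    exact hdet m (Matrix.exists_mulVec_eq_zero_iff.1 ⟨v, hvne, hMv⟩)
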